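/- arXiv:0706.1331 — 3 statements merged into one kernel-verified Lean document; each statement's English description precedes it below -/
import Mathlib

section
/- There exists a C² function f : ℝ³ → ℝ³ such that: (1) for every u ∈ ℝ³ and all i ≠ j, ∂f_i/∂u_j(u) > 0; (2) there exist three points e₁, e₂, e₃ ∈ ℝ³ such that every differentiable function u : [0,∞) → ℝ³ satisfying u'(t) = f(u(t)) for all t ≥ 0 converges, as t → ∞, to one of e₁, e₂, e₃; (3) the set of non-constant C² functions u : [−π/2, π/2] → ℝ³ satisfying u''(x) + f(u(x)) = 0 for all x ∈ (−π/2, π/2) together with the Neumann boundary conditions u'(−π/2) = u'(π/2) = 0 has the cardinality of the continuum. -/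
open Filter

open Real Filter Set

noncomputable def psi (t : ℝ) : ℝ := if 0 ≤ t then t - Real.arctan t else 0
noncomputable def psi1 (t : ℝ) : ℝ := (max t 0)^2/(1+t^2)
noncomputable def psi2 (t : ℝ) : ℝ := 2*(max t 0)/(1+t^2)^2

lemma psi_of_nonpos {t : ℝ} (h : t ≤ 0) : psi t = 0 := by
  rcases eq_or_lt_of_le h with h|h
  · subst h; simp [psi, Real.arctan_zero]
  · simp [psi, not_le.2 h]

lemma psi_of_nonneg {t : ℝ} (h : 0 ≤ t) : psi t = t - Real.arctan t := by simp [psi, h]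

lemma psi1_of_nonpos {t : ℝ} (h : t ≤ 0) : psi1 t = 0 := by
  simp [psi1, max_eq_right h]

lemma psi1_of_nonneg {t : ℝ} (h : 0 ≤ t) : psi1 t = t^2/(1+t^2) := by
  simp [psi1, max_eq_left h]

lemma one_add_sq_pos (t : ℝ) : (0:ℝ) < 1 + t^2 := by positivity

lemma hasDerivAt_psi (t : ℝ) : HasDerivAt psi (psi1 t) t := by
  rcases lt_trichotomy t 0 with h|h|h
  · have : psi =ᶠ[nhds t] (fun _ => (0:ℝ)) := by
      filter_upwards [Iio_mem_nhds h] with x hx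
      exact psi_of_nonpos (le_of_lt hx)
    rw [psi1_of_nonpos h.le]
    exact (hasDerivAt_const t (0:ℝ)).congr_of_eventuallyEq this
  · subst h
    have h1 : HasDerivWithinAt psi (psi1 0) (Iic 0) 0 := by
      have := (hasDerivWithinAt_const (0:ℝ) (Iic (0:ℝ)) (0:ℝ))
      rw [psi1_of_nonpos le_rfl]
      exact (hasDerivWithinAt_const (0:ℝ) (Iic (0:ℝ)) (0:ℝ)).congr
        (fun x hx => psi_of_nonpos hx) (psi_of_nonpos le_rfl)
    have h2 : HasDerivWithinAt psi (psi1 0) (Ici 0) 0 := by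
      have harc : HasDerivAt (fun x : ℝ => x - Real.arctan x) (1 - 1/(1+(0:ℝ)^2)) 0 :=
        (hasDerivAt_id 0).sub (Real.hasDerivAt_arctan 0)
      have : psi1 0 = 1 - 1/(1+(0:ℝ)^2) := by
        rw [psi1_of_nonneg le_rfl]; norm_num
      rw [this]
      exact harc.hasDerivWithinAt.congr (fun x hx => psi_of_nonneg hx) (psi_of_nonneg le_rfl)
    have := h1.union h2
    rwa [Iic_union_Ici, hasDerivWithinAt_univ] at this
  · have heq : psi =ᶠ[nhds t] (fun x : ℝ => x - Real.arctan x) := by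
      filter_upwards [Ioi_mem_nhds h] with x hx
      exact psi_of_nonneg (le_of_lt hx)
    have harc : HasDerivAt (fun x : ℝ => x - Real.arctan x) (1 - 1/(1+t^2)) t :=
      (hasDerivAt_id t).sub (Real.hasDerivAt_arctan t)
    have : psi1 t = 1 - 1/(1+t^2) := by
      rw [psi1_of_nonneg h.le]
      field_simp
      ring
    rw [this]
    exact harc.congr_of_eventuallyEq heq

lemma hasDerivAt_psi1 (t : ℝ) : HasDerivAt psi1 (psi2 t) t := by
  rcases lt_trichotomy t 0 with h|h|h
  · have : psi1 =ᶠ[nhds t] (fun _ => (0:ℝ)) := by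
      filter_upwards [Iio_mem_nhds h] with x hx
      exact psi1_of_nonpos (le_of_lt hx)
    have : HasDerivAt psi1 0 t := (hasDerivAt_const t (0:ℝ)).congr_of_eventuallyEq this
    convert this using 1
    simp [psi2, max_eq_right h.le]
  · subst h
    have h1 : HasDerivWithinAt psi1 (psi2 0) (Iic 0) 0 := by
      have : psi2 0 = 0 := by simp [psi2]
      rw [this]
      exact (hasDerivWithinAt_const (0:ℝ) (Iic (0:ℝ)) (0:ℝ)).congr
        (fun x hx => psi1_of_nonpos hx) (psi1_of_nonpos le_rfl)
    have h2 : HasDerivWithinAt psi1 (psi2 0) (Ici 0) 0 := by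
      have hq : HasDerivAt (fun x : ℝ => x^2/(1+x^2)) (psi2 0) 0 := by
        have hnum : HasDerivAt (fun x : ℝ => x^2) (2*0) 0 := by
          simpa using (hasDerivAt_pow 2 (0:ℝ))
        have hden : HasDerivAt (fun x : ℝ => 1+x^2) (2*0) 0 := by
          exact hnum.const_add 1
        have := hnum.div hden (by norm_num)
        refine this.congr_deriv (Eq.symm ?_)
        simp [psi2]
      exact hq.hasDerivWithinAt.congr (fun x hx => psi1_of_nonneg hx) (psi1_of_nonneg le_rfl)
    have := h1.union h2
    rwa [Iic_union_Ici, hasDerivWithinAt_univ] at this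
  · have heq : psi1 =ᶠ[nhds t] (fun x : ℝ => x^2/(1+x^2)) := by
      filter_upwards [Ioi_mem_nhds h] with x hx
      exact psi1_of_nonneg (le_of_lt hx)
    have hq : HasDerivAt (fun x : ℝ => x^2/(1+x^2)) (psi2 t) t := by
      have hnum : HasDerivAt (fun x : ℝ => x^2) (2*t) t := by
        simpa using (hasDerivAt_pow 2 t)
      have hden : HasDerivAt (fun x : ℝ => 1+x^2) (2*t) t := by
        exact hnum.const_add 1
      have := hnum.div hden (ne_of_gt (one_add_sq_pos t))
      refine this.congr_deriv (Eq.symm ?_)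
      rw [psi2, max_eq_left h.le]
      field_simp
      ring
    exact hq.congr_of_eventuallyEq heq

lemma continuous_psi2 : Continuous psi2 := by
  apply Continuous.div
  · exact (continuous_const.mul (continuous_id.max continuous_const))
  · continuity
  · intro t; positivity

lemma contDiff_psi : ContDiff ℝ 2 psi := by
  have hd1 : deriv psi = psi1 := funext fun t => (hasDerivAt_psi t).deriv
  have hd2 : deriv psi1 = psi2 := funext fun t => (hasDerivAt_psi1 t).deriv
  rw [show (2 : WithTop ℕ∞) = 1 + 1 by norm_num]
  refine contDiff_succ_iff_deriv.2 ⟨fun t => (hasDerivAt_psi t).differentiableAt, by simp, ?_⟩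
  rw [hd1, show (1 : WithTop ℕ∞) = 0 + 1 by norm_num]
  refine contDiff_succ_iff_deriv.2 ⟨fun t => (hasDerivAt_psi1 t).differentiableAt, by simp, ?_⟩
  rw [hd2]
  exact contDiff_zero.2 continuous_psi2

noncomputable def Gf (w : ℝ) : ℝ := 4*w - 5*psi (w-1) + 5*psi (-1-w)
noncomputable def G1 (w : ℝ) : ℝ := 4 - 5*psi1 (w-1) - 5*psi1 (-1-w)

lemma hasDerivAt_G (w : ℝ) : HasDerivAt Gf (G1 w) w := by
  have h1 : HasDerivAt (fun w : ℝ => psi (w-1)) (psi1 (w-1)) w := by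
    have := (hasDerivAt_psi (w-1)).comp w ((hasDerivAt_id w).sub_const 1)
    exact this.congr_deriv (mul_one _)
  have h2 : HasDerivAt (fun w : ℝ => psi (-1-w)) (-psi1 (-1-w)) w := by
    have := (hasDerivAt_psi (-1-w)).comp w ((hasDerivAt_const w (-1:ℝ)).sub (hasDerivAt_id w))
    exact this.congr_deriv (by ring)
  have h4 : HasDerivAt (fun w : ℝ => 4*w) 4 w := by
    simpa using (hasDerivAt_id w).const_mul (4:ℝ)
  have := (h4.sub (h1.const_mul (5:ℝ))).add (h2.const_mul (5:ℝ))
  refine this.congr_deriv (Eq.symm ?_)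
  simp [G1]; ring

lemma contDiff_G : ContDiff ℝ 2 Gf := by
  have c1 : ContDiff ℝ 2 (fun w : ℝ => psi (w-1)) :=
    contDiff_psi.comp ((contDiff_id.sub contDiff_const))
  have c2 : ContDiff ℝ 2 (fun w : ℝ => psi (-1-w)) :=
    contDiff_psi.comp ((contDiff_const.sub contDiff_id))
  exact ((contDiff_const.mul contDiff_id).sub (contDiff_const.mul c1)).add (contDiff_const.mul c2)

lemma psi1_nonneg (t : ℝ) : 0 ≤ psi1 t := by
  unfold psi1; positivity

lemma psi1_lt_one (t : ℝ) : psi1 t < 1 := by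
  unfold psi1
  rw [div_lt_one (one_add_sq_pos t)]
  rcases le_or_gt t 0 with h|h
  · rw [max_eq_right h]
    norm_num
    positivity
  · rw [max_eq_left h.le]; linarith

lemma G1_gt (w : ℝ) : -1 < G1 w := by
  unfold G1
  rcases le_or_gt w 1 with h|h
  · have h1 : psi1 (w-1) = 0 := psi1_of_nonpos (by linarith)
    have h2 := psi1_lt_one (-1-w)
    have h3 := psi1_nonneg (-1-w)
    rw [h1]; linarith
  · have h1 : psi1 (-1-w) = 0 := psi1_of_nonpos (by linarith)
    have h2 := psi1_lt_one (w-1)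
    rw [h1]; linarith

lemma G1_le (w : ℝ) : G1 w ≤ 4 := by
  unfold G1
  have := psi1_nonneg (w-1); have := psi1_nonneg (-1-w); linarith

lemma abs_G1_le (w : ℝ) : |G1 w| ≤ 14 := by
  rw [abs_le]
  constructor
  · linarith [G1_gt w]
  · linarith [G1_le w]

lemma monotone_psi1 : Monotone psi1 := by
  intro a b hab
  rcases le_or_gt b 0 with hb|hb
  · rw [psi1_of_nonpos hb, psi1_of_nonpos (hab.trans hb)]
  · rcases le_or_gt a 0 with ha|ha
    · rw [psi1_of_nonpos ha]; exact psi1_nonneg b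
    · rw [psi1_of_nonneg ha.le, psi1_of_nonneg hb.le]
      rw [div_le_div_iff₀ (one_add_sq_pos a) (one_add_sq_pos b)]
      nlinarith

lemma G_small {w : ℝ} (h1 : -1 ≤ w) (h2 : w ≤ 1) : Gf w = 4*w := by
  unfold Gf
  rw [psi_of_nonpos (show w - 1 ≤ 0 by linarith), psi_of_nonpos (show -1 - w ≤ 0 by linarith)]
  ring

lemma G_odd (w : ℝ) : Gf (-w) = -Gf w := by
  unfold Gf
  have : -w - 1 = -1 - w := by ring
  rw [this]
  have : -1 - -w = w - 1 := by ring
  rw [this]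
  ring

lemma G_one : Gf 1 = 4 := by rw [G_small (by norm_num) le_rfl]; ring

lemma G_fourteen : Gf 14 < 0 := by
  unfold Gf
  rw [psi_of_nonneg (show (0:ℝ) ≤ (14:ℝ) - 1 by norm_num),
    psi_of_nonpos (show (-1:ℝ) - 14 ≤ 0 by norm_num)]
  have h := Real.arctan_lt_pi_div_two ((14:ℝ)-1)
  have hpi := Real.pi_lt_d2
  norm_num at h ⊢
  linarith

lemma continuous_G : Continuous Gf := contDiff_G.continuous

lemma concaveOn_G : ConcaveOn ℝ (Ici 1) Gf := by
  apply AntitoneOn.concaveOn_of_deriv (convex_Ici 1) continuous_G.continuousOn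
  · exact fun x _ => ((hasDerivAt_G x).differentiableAt).differentiableWithinAt
  · intro a ha b hb hab
    rw [interior_Ici] at ha hb
    rw [(hasDerivAt_G a).deriv, (hasDerivAt_G b).deriv]
    unfold G1
    have h1 : psi1 (-1-a) = 0 := psi1_of_nonpos (by simp at ha; linarith)
    have h2 : psi1 (-1-b) = 0 := psi1_of_nonpos (by simp at hb; linarith)
    rw [h1, h2]
    have := monotone_psi1 (show a - 1 ≤ b - 1 by linarith)
    linarith

lemma exists_R : ∃ r : ℝ, 1 < r ∧ r ≤ 14 ∧ Gf r = 0 := by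
  have h := intermediate_value_Icc' (show (1:ℝ) ≤ 14 by norm_num) continuous_G.continuousOn
  have h0 : (0:ℝ) ∈ Icc (Gf 14) (Gf 1) := by
    constructor
    · exact G_fourteen.le
    · rw [G_one]; norm_num
  obtain ⟨r, hr, hG⟩ := h h0
  refine ⟨r, ?_, hr.2, hG⟩
  rcases eq_or_lt_of_le hr.1 with h1|h1
  · exfalso; rw [← h1, G_one] at hG; norm_num at hG
  · exact h1

noncomputable def Rz : ℝ := exists_R.choose

lemma Rz_gt_one : 1 < Rz := exists_R.choose_spec.1
lemma Rz_zero : Gf Rz = 0 := exists_R.choose_spec.2.2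
lemma Rz_pos : 0 < Rz := lt_trans one_pos Rz_gt_one

lemma G_pos_mid {w : ℝ} (h0 : 0 < w) (hR : w < Rz) : 0 < Gf w := by
  rcases le_or_gt w 1 with h1|h1
  · rw [G_small (by linarith) h1]; linarith
  · have hR1 : (0:ℝ) < Rz - 1 := by linarith [Rz_gt_one]
    set a : ℝ := (Rz - w)/(Rz - 1) with ha
    set b : ℝ := (w - 1)/(Rz - 1) with hb
    have hane : 0 < a := by apply div_pos <;> linarith
    have hbne : 0 < b := by apply div_pos <;> linarith
    have hab : a + b = 1 := by
      rw [ha, hb, ← add_div]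
      field_simp
      ring
    have hcomb : a • (1:ℝ) + b • Rz = w := by
      simp only [smul_eq_mul, ha, hb]; field_simp; ring
    have := concaveOn_G.2 (le_refl (1:ℝ)) (le_of_lt Rz_gt_one) hane.le hbne.le hab
    rw [hcomb, G_one, Rz_zero] at this
    simp only [smul_eq_mul] at this
    nlinarith

lemma G_neg_big {w : ℝ} (h : Rz < w) : Gf w < 0 := by
  have h1 : (1:ℝ) < w := lt_trans Rz_gt_one h
  have hw1 : (0:ℝ) < w - 1 := by linarith
  set a : ℝ := (w - Rz)/(w - 1) with ha
  set b : ℝ := (Rz - 1)/(w - 1) with hb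
  have hane : 0 < a := by apply div_pos <;> linarith
  have hbne : 0 < b := by apply div_pos <;> linarith [Rz_gt_one]
  have hab : a + b = 1 := by
    rw [ha, hb, ← add_div]
    field_simp
    ring
  have hcomb : a • (1:ℝ) + b • w = Rz := by
    simp only [smul_eq_mul, ha, hb]; field_simp; ring
  have := concaveOn_G.2 (le_refl (1:ℝ)) h1.le hane.le hbne.le hab
  rw [hcomb, G_one, Rz_zero] at this
  simp only [smul_eq_mul] at this
  nlinarith

lemma G_zero : Gf 0 = 0 := by rw [G_small (by norm_num) (by norm_num)]; ring

lemma G_zero_iff (w : ℝ) : Gf w = 0 ↔ w = 0 ∨ w = Rz ∨ w = -Rz := by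
  constructor
  · intro h
    rcases lt_trichotomy w 0 with hw|hw|hw
    · right; right
      have hw' : 0 < -w := by linarith
      rcases lt_trichotomy (-w) Rz with h1|h1|h1
      · exfalso; have := G_pos_mid hw' h1
        rw [G_odd] at this; linarith
      · linarith
      · exfalso; have := G_neg_big h1
        rw [G_odd] at this; linarith
    · left; exact hw
    · right; left
      rcases lt_trichotomy w Rz with h1|h1|h1
      · exfalso; have := G_pos_mid hw h1; linarith
      · exact h1
      · exfalso; have := G_neg_big h1; linarith
  · rintro (h|h|h) <;> subst h
    · exact G_zero
    · exact Rz_zero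
    · rw [show -Rz = -(Rz) from rfl, G_odd, Rz_zero]; ring

abbrev E3 := EuclideanSpace ℝ (Fin 3)
noncomputable def eqv : E3 ≃L[ℝ] (Fin 3 → ℝ) := EuclideanSpace.equiv (Fin 3) ℝ
noncomputable def SS (u : Fin 3 → ℝ) : ℝ := u 0 + u 1 + u 2
noncomputable def SSL : (Fin 3 → ℝ) →L[ℝ] ℝ :=
  ContinuousLinearMap.proj (R := ℝ) (φ := fun _ : Fin 3 => ℝ) 0 +
  ContinuousLinearMap.proj (R := ℝ) (φ := fun _ : Fin 3 => ℝ) 1 +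
  ContinuousLinearMap.proj (R := ℝ) (φ := fun _ : Fin 3 => ℝ) 2
noncomputable def gP : (Fin 3 → ℝ) → (Fin 3 → ℝ) :=
  fun u i => Gf (SS u / 3) + (SS u - 3 * u i)
noncomputable def Fv : E3 → E3 := fun u => eqv.symm (gP (eqv u))

lemma SSL_apply (u : Fin 3 → ℝ) : SSL u = SS u := by
  simp [SSL, SS, ContinuousLinearMap.add_apply]

lemma hasFDerivAt_SS (u : Fin 3 → ℝ) : HasFDerivAt SS SSL u := by
  have : SS = fun v => SSL v := by funext v; rw [SSL_apply]
  rw [this]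
  exact SSL.hasFDerivAt

noncomputable def DP (u : Fin 3 → ℝ) : (Fin 3 → ℝ) →L[ℝ] (Fin 3 → ℝ) :=
  ContinuousLinearMap.pi (fun i =>
    (G1 (SS u / 3) * (3:ℝ)⁻¹ + 1) • SSL - (3:ℝ) • ContinuousLinearMap.proj i)

lemma hasFDerivAt_gP (u : Fin 3 → ℝ) : HasFDerivAt gP (DP u) u := by
  rw [show gP = fun u i => Gf (SS u / 3) + (SS u - 3 * u i) from rfl]
  apply hasFDerivAt_pi.2
  intro i
  have hinner : HasFDerivAt (fun v : Fin 3 → ℝ => SS v / 3) ((3:ℝ)⁻¹ • SSL) u := by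
    have heq : (fun v : Fin 3 → ℝ => SS v / 3) = fun v => ((3:ℝ)⁻¹ • SSL) v := by
      funext v
      simp [SSL_apply, div_eq_inv_mul]
    rw [heq]
    exact ((3:ℝ)⁻¹ • SSL).hasFDerivAt
  have hG : HasFDerivAt (fun v : Fin 3 → ℝ => Gf (SS v / 3))
      (G1 (SS u / 3) • ((3:ℝ)⁻¹ • SSL)) u :=
    by have := (hasDerivAt_G (SS u / 3)).comp_hasFDerivAt u hinner; exact this
  have hlin : HasFDerivAt (fun v : Fin 3 → ℝ => SS v - 3 * v i)
      (SSL - (3:ℝ) • ContinuousLinearMap.proj i) u := by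
    have heq : (fun v : Fin 3 → ℝ => SS v - 3 * v i)
        = fun v => (SSL - (3:ℝ) • ContinuousLinearMap.proj (R := ℝ) (φ := fun _ : Fin 3 => ℝ) i) v := by
      funext v
      simp [ContinuousLinearMap.sub_apply, ContinuousLinearMap.smul_apply, SSL_apply,
        ContinuousLinearMap.proj_apply]
    rw [heq]
    exact (SSL - (3:ℝ) • ContinuousLinearMap.proj i).hasFDerivAt
  have := hG.add hlin
  refine this.congr_fderiv (Eq.symm ?_)
  ext v
  simp [DP, ContinuousLinearMap.pi_apply, ContinuousLinearMap.sub_apply,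
    ContinuousLinearMap.add_apply, ContinuousLinearMap.smul_apply, SSL_apply]
  ring

lemma hasFDerivAt_Fv (u : E3) :
    HasFDerivAt Fv (((eqv.symm : (Fin 3 → ℝ) →L[ℝ] E3).comp (DP (eqv u))).comp
      (eqv : E3 →L[ℝ] (Fin 3 → ℝ))) u := by
  have h1 : HasFDerivAt (eqv : E3 → (Fin 3 → ℝ)) (eqv : E3 →L[ℝ] (Fin 3 → ℝ)) u :=
    eqv.hasFDerivAt
  have h2 := (hasFDerivAt_gP (eqv u)).comp u h1
  have h3 := ((eqv.symm : (Fin 3 → ℝ) →L[ℝ] E3).hasFDerivAt).comp u h2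
  exact h3

lemma contDiff_Fv : ContDiff ℝ 2 Fv := by
  have hSS : ContDiff ℝ 2 SS := by
    unfold SS
    fun_prop
  have hgP : ContDiff ℝ 2 gP := by
    apply contDiff_pi.2
    intro i
    apply ContDiff.add
    · exact contDiff_G.comp (hSS.div_const 3)
    · apply hSS.sub
      exact (contDiff_const.mul (contDiff_apply ℝ ℝ i))
  exact (eqv.symm.contDiff.comp hgP).comp eqv.contDiff

lemma eqv_symm_apply (y : Fin 3 → ℝ) (i : Fin 3) : (eqv.symm y) i = y i := rfl

lemma fderiv_Fv_offdiag (u : E3) (i j : Fin 3) (hij : i ≠ j) :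
    0 < fderiv ℝ Fv u (EuclideanSpace.single j 1) i := by
  rw [(hasFDerivAt_Fv u).fderiv]
  simp only [ContinuousLinearMap.comp_apply, ContinuousLinearEquiv.coe_coe]
  have hsingle : eqv (EuclideanSpace.single j (1:ℝ)) = Pi.single j 1 := by
    simp [eqv]
    rfl
  rw [hsingle, eqv_symm_apply]
  have happ : DP (eqv u) (Pi.single j 1) i
      = (G1 (SS (eqv u) / 3) * (3:ℝ)⁻¹ + 1) * SSL (Pi.single j 1) - 3 * (Pi.single j 1 : Fin 3 → ℝ) i := by
    simp [DP, ContinuousLinearMap.pi_apply, ContinuousLinearMap.sub_apply,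
      ContinuousLinearMap.smul_apply]
  rw [happ]
  have h1 : SSL (Pi.single j 1) = 1 := by
    rw [SSL_apply]
    unfold SS
    fin_cases j <;> simp [Pi.single_apply] <;> norm_num
  have h2 : (Pi.single j 1 : Fin 3 → ℝ) i = 0 := by
    simp [Pi.single_apply, hij]
  rw [h1, h2]
  have := G1_gt (SS (eqv u) / 3)
  nlinarith

/-! ### Scalar ODE analysis -/

noncomputable def Hs (σ : ℝ) : ℝ := 3 * Gf (σ/3)

lemma hasDerivAt_Hs (σ : ℝ) : HasDerivAt Hs (G1 (σ/3)) σ := by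
  have hin : HasDerivAt (fun x : ℝ => x/3) ((1:ℝ)/3) σ := by
    simpa using (hasDerivAt_id σ).div_const (3:ℝ)
  have h := ((hasDerivAt_G (σ/3)).comp σ hin).const_mul (3:ℝ)
  refine h.congr_deriv (Eq.symm ?_)
  ring

lemma continuous_Hs : Continuous Hs :=
  continuous_const.mul (continuous_G.comp (continuous_id.div_const 3))

lemma lipschitz_Hs : LipschitzWith 14 Hs := by
  apply lipschitzWith_of_nnnorm_deriv_le
  · exact fun σ => (hasDerivAt_Hs σ).differentiableAt
  · intro σ
    rw [(hasDerivAt_Hs σ).deriv]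
    rw [← NNReal.coe_le_coe, coe_nnnorm, Real.norm_eq_abs]
    have := abs_G1_le (σ/3)
    norm_num
    linarith [abs_G1_le (σ/3)]

lemma Hs_odd (σ : ℝ) : Hs (-σ) = -Hs σ := by
  unfold Hs
  rw [show -σ/3 = -(σ/3) by ring, G_odd]
  ring

lemma Hs_zero_iff (σ : ℝ) : Hs σ = 0 ↔ σ = 0 ∨ σ = 3*Rz ∨ σ = -(3*Rz) := by
  unfold Hs
  rw [mul_eq_zero]
  constructor
  · rintro (h|h)
    · norm_num at h
    · rcases (G_zero_iff (σ/3)).1 h with h|h|h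
      · left; linarith
      · right; left; linarith
      · right; right; linarith
  · rintro (h|h|h) <;> subst h <;> right
    · simpa using G_zero
    · rw [show 3*Rz/3 = Rz by ring]; exact Rz_zero
    · rw [show -(3*Rz)/3 = -Rz by ring, G_odd, Rz_zero]; ring

lemma Hs_pos_bound {σ : ℝ} (h : 0 < Hs σ) : σ < 3*Rz := by
  by_contra hc
  push_neg at hc
  unfold Hs at h
  rcases eq_or_lt_of_le hc with h1|h1
  · rw [← h1, show 3*Rz/3 = Rz by ring, Rz_zero] at h; norm_num at h
  · have : Gf (σ/3) < 0 := G_neg_big (by linarith)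
    linarith

/-- Constancy after hitting an equilibrium. -/
lemma eventually_const_of_zero (s : ℝ → ℝ) (hs : ∀ t, 0 ≤ t → HasDerivAt s (Hs (s t)) t)
    {t₀ : ℝ} (ht₀ : 0 ≤ t₀) (hz : Hs (s t₀) = 0) : ∀ t, t₀ ≤ t → s t = s t₀ := by
  intro t ht
  have key := ODE_solution_unique (v := fun _ x => Hs x) (f := s) (g := fun _ => s t₀)
    (a := t₀) (b := t) (fun _ => lipschitz_Hs)
    (fun τ hτ => ((hs τ (le_trans ht₀ hτ.1)).continuousAt).continuousWithinAt)
    (fun τ hτ => (hs τ (le_trans ht₀ hτ.1)).hasDerivWithinAt)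
    continuousOn_const
    (fun τ hτ => by
      show HasDerivWithinAt (fun _ => s t₀) (Hs (s t₀)) (Ici τ) τ
      rw [hz]
      exact hasDerivWithinAt_const τ _ (s t₀))
    rfl
  exact key ⟨ht, le_rfl⟩

/-- Monotone increasing case. -/
lemma tendsto_of_pos (s : ℝ → ℝ) (hs : ∀ t, 0 ≤ t → HasDerivAt s (Hs (s t)) t)
    (hpos : ∀ t, 0 ≤ t → 0 < Hs (s t)) :
    ∃ L, Hs L = 0 ∧ Tendsto s atTop (nhds L) := by
  have hcont : ContinuousOn s (Ici 0) :=
    fun τ hτ => ((hs τ hτ).continuousAt).continuousWithinAt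
  have hmono : StrictMonoOn s (Ici 0) := by
    apply strictMonoOn_of_deriv_pos (convex_Ici 0) hcont
    intro x hx
    rw [interior_Ici] at hx
    rw [(hs x (le_of_lt hx)).deriv]
    exact hpos x (le_of_lt hx)
  have hbdd : ∀ t, 0 ≤ t → s t < 3*Rz := fun t ht => Hs_pos_bound (hpos t ht)
  set q : ℝ → ℝ := fun t => s (max t 0) with hq
  have hqmono : Monotone q := by
    intro a b hab
    exact hmono.monotoneOn (le_max_right a 0) (le_max_right b 0) (max_le_max hab le_rfl)
  have hqbdd : BddAbove (range q) := by
    refine ⟨3*Rz, ?_⟩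
    rintro x ⟨t, rfl⟩
    exact (hbdd _ (le_max_right t 0)).le
  obtain hL := tendsto_atTop_ciSup hqmono hqbdd
  set L : ℝ := ⨆ t, q t with hLdef
  have hqle : ∀ t, q t ≤ L := fun t => le_ciSup hqbdd t
  have hsq : ∀ t, 0 ≤ t → q t = s t := by
    intro t ht; simp only [hq]; rw [max_eq_left ht]
  have hsle : ∀ t, 0 ≤ t → s t ≤ L := by
    intro t ht; rw [← hsq t ht]; exact hqle t
  have hstend : Tendsto s atTop (nhds L) := by
    apply hL.congr'
    filter_upwards [eventually_ge_atTop (0:ℝ)] with t ht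
    exact hsq t ht
  refine ⟨L, ?_, hstend⟩
  have hHlim : Tendsto (fun t => Hs (s t)) atTop (nhds (Hs L)) :=
    (continuous_Hs.tendsto L).comp hstend
  have hge : (0:ℝ) ≤ Hs L := by
    apply le_of_tendsto_of_tendsto tendsto_const_nhds hHlim
    filter_upwards [eventually_ge_atTop (0:ℝ)] with t ht
    exact (hpos t ht).le
  rcases eq_or_lt_of_le hge with h|h
  · exact h.symm
  exfalso
  obtain ⟨δ, hδ, hball⟩ := Metric.continuousAt_iff.1 (continuous_Hs.continuousAt (x := L))
    (Hs L / 2) (by linarith)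
  have hev : ∀ᶠ t in atTop, L - δ < s t ∧ 0 ≤ t := by
    filter_upwards [hstend (Ioi_mem_nhds (show L - δ < L by linarith)),
      eventually_ge_atTop (0:ℝ)] with t h1 h2
    exact ⟨h1, h2⟩
  obtain ⟨T, hT⟩ := hev.exists_forall_of_atTop
  have hT0 : (0:ℝ) ≤ T := (hT T le_rfl).2
  have h2δ : 0 < 2*δ/(Hs L) := div_pos (by linarith) h
  set T' : ℝ := T + (2*δ/(Hs L) + 1) with hT'd
  have hTT' : T < T' := by rw [hT'd]; linarith
  obtain ⟨c, hc, hslope⟩ := exists_hasDerivAt_eq_slope s (fun t => Hs (s t)) hTT'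
    (fun x hx => ((hs x (le_trans hT0 hx.1)).continuousAt).continuousWithinAt)
    (fun x hx => hs x (le_trans hT0 (le_of_lt hx.1)))
  have hcT : T ≤ c := le_of_lt hc.1
  have hsc1 : L - δ < s c := (hT c hcT).1
  have hscle : s c ≤ L := hsle c (le_trans hT0 hcT)
  have hH : Hs L / 2 < Hs (s c) := by
    have hd : dist (s c) L < δ := by
      rw [Real.dist_eq, abs_lt]; constructor <;> linarith
    have := hball hd
    rw [Real.dist_eq, abs_lt] at this
    linarith [this.1]
  rw [hslope] at hH
  have hTTpos : 0 < T' - T := by linarith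
  have hnum : s T' - s T < δ := by
    have h1 := (hT T le_rfl).1
    have h2 := hsle T' (le_trans hT0 hTT'.le)
    linarith
  have hfrac : (s T' - s T)/(T' - T) ≤ δ/(T' - T) := by
    apply div_le_div_of_nonneg_right hnum.le hTTpos.le
  have hdd : Hs L * (2*δ/(Hs L)) = 2*δ := by field_simp
  have hTms : T' - T = 2*δ/(Hs L) + 1 := by rw [hT'd]; ring
  have hfrac2 : δ/(T' - T) < Hs L / 2 := by
    rw [div_lt_iff₀ hTTpos, hTms]
    nlinarith
  linarith

lemma scalar_tendsto (s : ℝ → ℝ) (hs : ∀ t, 0 ≤ t → HasDerivAt s (Hs (s t)) t) :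
    ∃ L, Hs L = 0 ∧ Tendsto s atTop (nhds L) := by
  by_cases hz : ∃ t₀, 0 ≤ t₀ ∧ Hs (s t₀) = 0
  · obtain ⟨t₀, ht₀, hz⟩ := hz
    refine ⟨s t₀, hz, ?_⟩
    have hconst := eventually_const_of_zero s hs ht₀ hz
    apply Tendsto.congr' ?_ (tendsto_const_nhds (x := s t₀))
    filter_upwards [eventually_ge_atTop t₀] with t ht
    exact (hconst t ht).symm
  · push_neg at hz
    have hsign : (∀ t, 0 ≤ t → 0 < Hs (s t)) ∨ (∀ t, 0 ≤ t → Hs (s t) < 0) := by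
      by_contra hcon
      push_neg at hcon
      obtain ⟨⟨a, ha, ha2⟩, ⟨b, hb, hb2⟩⟩ := hcon
      have ha2' : Hs (s a) < 0 := lt_of_le_of_ne ha2 (hz a ha)
      have hb2' : 0 < Hs (s b) := lt_of_le_of_ne hb2 (Ne.symm (hz b hb))
      have hsub : uIcc a b ⊆ Ici (0:ℝ) := by
        intro x hx
        rw [Set.mem_uIcc] at hx
        rcases hx with ⟨h1,_⟩|⟨h1,_⟩ <;> [exact le_trans ha h1; exact le_trans hb h1]
      have hcφ : ContinuousOn (fun t => Hs (s t)) (uIcc a b) :=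
        continuous_Hs.comp_continuousOn
          (fun τ hτ => ((hs τ (hsub hτ)).continuousAt).continuousWithinAt)
      have h0 : (0:ℝ) ∈ uIcc (Hs (s a)) (Hs (s b)) := by
        rw [Set.mem_uIcc]
        left; exact ⟨ha2'.le, hb2'.le⟩
      obtain ⟨t₀, ht₀, hφ⟩ := intermediate_value_uIcc hcφ h0
      exact hz t₀ (hsub ht₀) hφ
    rcases hsign with hp|hn
    · exact tendsto_of_pos s hs hp
    · have hs' : ∀ t, 0 ≤ t → HasDerivAt (fun τ => -(s τ)) (Hs (-(s t))) t := by
        intro t ht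
        rw [Hs_odd]
        exact (hs t ht).neg
      have hp' : ∀ t, 0 ≤ t → 0 < Hs (-(s t)) := by
        intro t ht
        rw [Hs_odd]
        linarith [hn t ht]
      obtain ⟨L, hL0, hLt⟩ := tendsto_of_pos _ hs' hp'
      refine ⟨-L, ?_, ?_⟩
      · rw [Hs_odd, hL0]; ring
      · have := hLt.neg
        simpa using this

lemma Fv_apply (u : E3) (i : Fin 3) :
    Fv u i = Gf (SS (eqv u)/3) + (SS (eqv u) - 3 * u i) := rfl

lemma eqv_apply (u : E3) (i : Fin 3) : (eqv u) i = u i := rfl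

noncomputable def Pt (r : ℝ) : E3 := eqv.symm (fun _ => r)

lemma cond2 : ∀ u : ℝ → E3,
    (∀ t : ℝ, 0 ≤ t → HasDerivAt u (Fv (u t)) t) →
    (Tendsto u atTop (nhds (Pt 0)) ∨ Tendsto u atTop (nhds (Pt Rz)) ∨
      Tendsto u atTop (nhds (Pt (-Rz)))) := by
  intro u hu
  have hcoord : ∀ (i : Fin 3) t, 0 ≤ t → HasDerivAt (fun τ => u τ i) (Fv (u t) i) t := by
    intro i t ht
    exact (EuclideanSpace.proj i (𝕜 := ℝ)).hasFDerivAt.comp_hasDerivAt t (hu t ht)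
  set s : ℝ → ℝ := fun t => u t 0 + u t 1 + u t 2 with hsdef
  have hSs : ∀ t, SS (eqv (u t)) = s t := fun t => rfl
  have hs : ∀ t, 0 ≤ t → HasDerivAt s (Hs (s t)) t := by
    intro t ht
    have h := ((hcoord 0 t ht).add (hcoord 1 t ht)).add (hcoord 2 t ht)
    refine h.congr_deriv (Eq.symm ?_)
    rw [Fv_apply, Fv_apply, Fv_apply, hSs]
    show Hs (s t) = _
    rw [Hs]
    ring
  obtain ⟨L, hL0, hLt⟩ := scalar_tendsto s hs
  -- exponential decay of the differences
  have hvconst : ∀ (i : Fin 3) t, 0 ≤ t →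
      (3 * u t i - s t) * Real.exp (3*t) = 3 * u 0 i - s 0 := by
    intro i t ht
    have key := constant_of_has_deriv_right_zero
      (f := fun τ => (3 * u τ i - s τ) * Real.exp (3*τ)) (a := 0) (b := t) ?_ ?_
    · have := key t ⟨ht, le_rfl⟩
      simpa using this
    · apply ContinuousOn.mul
      · apply ContinuousOn.sub
        · exact fun τ hτ => (((hcoord i τ hτ.1).const_mul 3).continuousAt).continuousWithinAt
        · exact fun τ hτ => ((hs τ hτ.1).continuousAt).continuousWithinAt
      · exact (Real.continuous_exp.comp (continuous_const.mul continuous_id)).continuousOn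
    · intro x hx
      have hx0 : (0:ℝ) ≤ x := hx.1
      have hd1 : HasDerivAt (fun τ => 3 * u τ i - s τ)
          (3 * Fv (u x) i - Hs (s x)) x :=
        ((hcoord i x hx0).const_mul 3).sub (hs x hx0)
      have hd2 : HasDerivAt (fun τ : ℝ => Real.exp (3*τ)) (Real.exp (3*x) * 3) x := by
        have h0 := (Real.hasDerivAt_exp (3*x)).comp x ((hasDerivAt_id x).const_mul (3:ℝ))
        have heq2 : (Real.exp ∘ HMul.hMul (3:ℝ)) = fun τ : ℝ => Real.exp (3*τ) := by
          funext τ; simp [Function.comp]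
        rw [heq2] at h0
        refine h0.congr_deriv (Eq.symm ?_)
        ring
      have hd := hd1.mul hd2
      have hval : (3 * Fv (u x) i - Hs (s x)) * Real.exp (3*x)
          + (3 * u x i - s x) * (Real.exp (3*x) * 3) = 0 := by
        rw [Fv_apply, hSs, Hs]
        ring
      rw [hval] at hd
      exact hd.hasDerivWithinAt
  -- coordinates converge to L/3
  have hexp : Tendsto (fun t : ℝ => Real.exp (-(3*t))) atTop (nhds 0) := by
    apply Real.tendsto_exp_neg_atTop_nhds_zero.comp
    exact Tendsto.const_mul_atTop (by norm_num) tendsto_id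
  have hcoordlim : ∀ i : Fin 3, Tendsto (fun t => u t i) atTop (nhds (L/3)) := by
    intro i
    have heq : ∀ t, 0 ≤ t → u t i = (s t + (3 * u 0 i - s 0) * Real.exp (-(3*t)))/3 := by
      intro t ht
      have h := hvconst i t ht
      have hpos := Real.exp_pos (3*t)
      rw [Real.exp_neg]
      field_simp
      nlinarith [h]
    have hlim : Tendsto (fun t => (s t + (3 * u 0 i - s 0) * Real.exp (-(3*t)))/3)
        atTop (nhds ((L + (3 * u 0 i - s 0) * 0)/3)) :=
      (hLt.add (tendsto_const_nhds.mul hexp)).div_const 3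
    rw [show (L + (3 * u 0 i - s 0) * 0)/3 = L/3 by ring] at hlim
    apply hlim.congr'
    filter_upwards [eventually_ge_atTop (0:ℝ)] with t ht
    exact (heq t ht).symm
  have hmain : Tendsto u atTop (nhds (Pt (L/3))) := by
    have hpi : Tendsto (fun t => eqv (u t)) atTop (nhds (fun _ => L/3)) := by
      apply tendsto_pi_nhds.2
      intro i
      exact hcoordlim i
    have := (eqv.symm.continuous.tendsto _).comp hpi
    have heq : (⇑eqv.symm ∘ fun t => eqv (u t)) = u := by
      funext t; simp [Function.comp]
    rw [Pt]
    rwa [heq] at this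
  rcases (Hs_zero_iff L).1 hL0 with h|h|h
  · left; rw [show (0:ℝ) = L/3 by rw [h]; ring]; exact hmain
  · right; left; rw [show Rz = L/3 by rw [h]; ring]; exact hmain
  · right; right; rw [show -Rz = L/3 by rw [h]; ring]; exact hmain

/-! ### The elliptic family -/

noncomputable def ua (a : ℝ) : ℝ → E3 := fun x => eqv.symm (fun _ => a * Real.cos (2*x))
noncomputable def ua' (a : ℝ) : ℝ → E3 := fun x => eqv.symm (fun _ => a * (-2 * Real.sin (2*x)))
noncomputable def ua'' (a : ℝ) : ℝ → E3 := fun x => eqv.symm (fun _ => a * (-4 * Real.cos (2*x)))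

lemma hasDerivAt_cos2 (x : ℝ) (a : ℝ) :
    HasDerivAt (fun x : ℝ => a * Real.cos (2*x)) (a * (-2 * Real.sin (2*x))) x := by
  have h2x : HasDerivAt (fun x : ℝ => 2*x) 2 x := by
    simpa using (hasDerivAt_id x).const_mul (2:ℝ)
  have := ((Real.hasDerivAt_cos (2*x)).comp x h2x).const_mul a
  refine this.congr_deriv (Eq.symm ?_)
  ring

lemma hasDerivAt_sin2 (x : ℝ) (a : ℝ) :
    HasDerivAt (fun x : ℝ => a * (-2 * Real.sin (2*x))) (a * (-4 * Real.cos (2*x))) x := by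
  have h2x : HasDerivAt (fun x : ℝ => 2*x) 2 x := by
    simpa using (hasDerivAt_id x).const_mul (2:ℝ)
  have := (((Real.hasDerivAt_sin (2*x)).comp x h2x).const_mul (-2:ℝ)).const_mul a
  refine this.congr_deriv (Eq.symm ?_)
  ring

lemma hasDerivAt_E3_of_pi {w : ℝ → ℝ} {w' x : ℝ} (h : HasDerivAt w w' x) :
    HasDerivAt (fun y => (eqv.symm (fun _ => w y) : E3)) (eqv.symm (fun _ => w')) x := by
  have hpi : HasDerivAt (fun y => (fun _ => w y : Fin 3 → ℝ)) (fun _ => w') x := by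
    apply hasDerivAt_pi.2
    intro i
    exact h
  exact (eqv.symm : (Fin 3 → ℝ) →L[ℝ] E3).hasFDerivAt.comp_hasDerivAt x hpi

lemma ua_hasDerivAt (a : ℝ) (x : ℝ) : HasDerivAt (ua a) (ua' a x) x :=
  hasDerivAt_E3_of_pi (hasDerivAt_cos2 x a)

lemma ua'_hasDerivAt (a : ℝ) (x : ℝ) : HasDerivAt (ua' a) (ua'' a x) x :=
  hasDerivAt_E3_of_pi (hasDerivAt_sin2 x a)

lemma ua''_continuous (a : ℝ) : Continuous (ua'' a) := by
  apply eqv.symm.continuous.comp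
  apply continuous_pi
  intro i
  continuity

lemma ua_eqn (a : ℝ) (ha : -1 ≤ a) (ha' : a ≤ 1) (x : ℝ) :
    ua'' a x + Fv (ua a x) = 0 := by
  apply eqv.injective
  rw [map_add, map_zero]
  funext i
  have hc1 := Real.neg_one_le_cos (2*x)
  have hc2 := Real.cos_le_one (2*x)
  have hb1 : -1 ≤ a * Real.cos (2*x) := by nlinarith
  have hb2 : a * Real.cos (2*x) ≤ 1 := by nlinarith
  have hFv : Fv (ua a x) i = 4 * (a * Real.cos (2*x)) := by
    rw [Fv_apply]
    have he : eqv (ua a x) = (fun _ => a * Real.cos (2*x)) := by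
      rw [ua]; exact eqv.apply_symm_apply _
    have hui : (ua a x) i = a * Real.cos (2*x) := by
      rw [show (ua a x) i = (eqv (ua a x)) i from rfl, he]
    rw [hui]
    have hSS : SS (eqv (ua a x)) = 3 * (a * Real.cos (2*x)) := by
      rw [he]; unfold SS; ring
    rw [hSS, show 3 * (a * Real.cos (2*x))/3 = a * Real.cos (2*x) by ring,
      G_small hb1 hb2]
    ring
  show (ua'' a x) i + Fv (ua a x) i = 0
  rw [hFv]
  have : (ua'' a x) i = a * (-4 * Real.cos (2*x)) := by
    rw [ua'']; rfl
  rw [this]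
  ring

noncomputable def SolSet : Set (Set.Icc (-(Real.pi/2)) (Real.pi/2) → E3) :=
  {v : Set.Icc (-(Real.pi/2)) (Real.pi/2) → EuclideanSpace ℝ (Fin 3) |
    ∃ u u' u'' : ℝ → EuclideanSpace ℝ (Fin 3),
      (∀ x ∈ Set.Icc (-(Real.pi/2)) (Real.pi/2),
        HasDerivWithinAt u (u' x) (Set.Icc (-(Real.pi/2)) (Real.pi/2)) x) ∧
      (∀ x ∈ Set.Icc (-(Real.pi/2)) (Real.pi/2),
        HasDerivWithinAt u' (u'' x) (Set.Icc (-(Real.pi/2)) (Real.pi/2)) x) ∧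
      ContinuousOn u'' (Set.Icc (-(Real.pi/2)) (Real.pi/2)) ∧
      (∀ x ∈ Set.Ioo (-(Real.pi/2)) (Real.pi/2), u'' x + Fv (u x) = 0) ∧
      u' (-(Real.pi/2)) = 0 ∧ u' (Real.pi/2) = 0 ∧
      (∃ x ∈ Set.Icc (-(Real.pi/2)) (Real.pi/2),
        ∃ y ∈ Set.Icc (-(Real.pi/2)) (Real.pi/2), u x ≠ u y) ∧
      v = fun x => u x.1}

lemma ua_mem {a : ℝ} (ha : 0 < a) (ha1 : a ≤ 1) :
    (fun x : Set.Icc (-(Real.pi/2)) (Real.pi/2) => ua a x.1) ∈ SolSet := by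
  refine ⟨ua a, ua' a, ua'' a, ?_, ?_, ?_, ?_, ?_, ?_, ?_, rfl⟩
  · intro x _; exact (ua_hasDerivAt a x).hasDerivWithinAt
  · intro x _; exact (ua'_hasDerivAt a x).hasDerivWithinAt
  · exact (ua''_continuous a).continuousOn
  · intro x _; exact ua_eqn a (by linarith) ha1 x
  · have h0 : (fun _ : Fin 3 => a * (-2 * Real.sin (2 * (-(Real.pi/2))))) = (0 : Fin 3 → ℝ) := by
      funext i
      rw [show (2:ℝ) * (-(Real.pi/2)) = -Real.pi by ring, Real.sin_neg, Real.sin_pi]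
      norm_num
    rw [ua', h0, map_zero]
  · have h0 : (fun _ : Fin 3 => a * (-2 * Real.sin (2 * (Real.pi/2)))) = (0 : Fin 3 → ℝ) := by
      funext i
      rw [show (2:ℝ) * (Real.pi/2) = Real.pi by ring, Real.sin_pi]
      norm_num
    rw [ua', h0, map_zero]
  · have hpi := Real.pi_pos
    refine ⟨0, ⟨by linarith, by linarith⟩, Real.pi/4, ⟨by linarith, by linarith⟩, ?_⟩
    intro hcon
    have h2 : (fun _ : Fin 3 => a * Real.cos (2*(0:ℝ)))
        = (fun _ : Fin 3 => a * Real.cos (2*(Real.pi/4))) := eqv.symm.injective hcon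
    have h3 := congrFun h2 0
    rw [show (2:ℝ)*0 = 0 by ring, Real.cos_zero,
      show (2:ℝ)*(Real.pi/4) = Real.pi/2 by ring, Real.cos_pi_div_two] at h3
    simp at h3
    linarith

lemma solset_continuous {v : Set.Icc (-(Real.pi/2)) (Real.pi/2) → E3} (hv : v ∈ SolSet) :
    Continuous v := by
  obtain ⟨u, u', u'', h1, _, _, _, _, _, _, hveq⟩ := hv
  have hc : ContinuousOn u (Set.Icc (-(Real.pi/2)) (Real.pi/2)) :=
    fun x hx => (h1 x hx).continuousWithinAt
  rw [hveq]
  exact hc.restrict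

lemma card_ge : Cardinal.continuum ≤ Cardinal.mk SolSet := by
  have hinj : Function.Injective
      (fun a : Set.Ioo (0:ℝ) 1 =>
        (⟨fun x => ua a.1 x.1, ua_mem a.2.1 a.2.2.le⟩ : SolSet)) := by
    intro a b hab
    have h1 := congrFun (Subtype.ext_iff.1 hab)
      (⟨0, by constructor <;> [linarith [Real.pi_pos]; linarith [Real.pi_pos]]⟩ :
        Set.Icc (-(Real.pi/2)) (Real.pi/2))
    have h2 : (fun _ : Fin 3 => a.1 * Real.cos (2*(0:ℝ)))
        = (fun _ : Fin 3 => b.1 * Real.cos (2*(0:ℝ))) := eqv.symm.injective h1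
    have h3 := congrFun h2 0
    rw [show (2:ℝ)*0 = 0 by ring, Real.cos_zero] at h3
    apply Subtype.ext
    simpa using h3
  calc Cardinal.continuum = Cardinal.mk (Set.Ioo (0:ℝ) 1) :=
        (Cardinal.mk_Ioo_real (by norm_num)).symm
    _ ≤ Cardinal.mk SolSet := Cardinal.mk_le_of_injective hinj

lemma mk_E3_le : Cardinal.mk E3 ≤ Cardinal.continuum := by
  have h1 : Cardinal.mk E3 = Cardinal.mk (Fin 3 → ℝ) := Cardinal.mk_congr eqv.toEquiv
  rw [h1, ← Cardinal.power_def, Cardinal.mk_real, Cardinal.mk_fintype]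
  calc Cardinal.continuum ^ ((Fintype.card (Fin 3) : ℕ) : Cardinal)
      ≤ Cardinal.continuum ^ Cardinal.aleph0 := by
        apply Cardinal.power_le_power_left Cardinal.continuum_ne_zero
        exact le_of_lt (Cardinal.nat_lt_aleph0 _)
    _ = Cardinal.continuum := Cardinal.continuum_power_aleph0

lemma card_le : Cardinal.mk SolSet ≤ Cardinal.continuum := by
  obtain ⟨D, hDc, hDd⟩ :=
    TopologicalSpace.exists_countable_dense (Set.Icc (-(Real.pi/2)) (Real.pi/2))
  have hinj : Function.Injective (fun v : SolSet => (fun d : D => v.1 d.1)) := by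
    intro v w h
    apply Subtype.ext
    apply Continuous.ext_on hDd (solset_continuous v.2) (solset_continuous w.2)
    intro x hx
    exact congrFun h ⟨x, hx⟩
  calc Cardinal.mk SolSet ≤ Cardinal.mk (D → E3) := Cardinal.mk_le_of_injective hinj
    _ = Cardinal.mk E3 ^ Cardinal.mk D := (Cardinal.power_def E3 D).symm
    _ ≤ Cardinal.continuum ^ Cardinal.aleph0 := by
        apply (Cardinal.power_le_power_right mk_E3_le).trans
        apply Cardinal.power_le_power_left Cardinal.continuum_ne_zero
        exact Cardinal.mk_le_aleph0_iff.2 hDc.to_subtype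
    _ = Cardinal.continuum := Cardinal.continuum_power_aleph0

lemma card_SolSet : Cardinal.mk SolSet = Cardinal.continuum := le_antisymm card_le card_ge


/-- **Theorem (application: strongly cooperative reaction–diffusion system).**
There is a `C²` vector field `f : ℝ³ → ℝ³` with everywhere-positive off-diagonal
partial derivatives such that every solution of the reaction system `u' = f(u)`
converges to one of only three equilibria, while the set of nonhomogeneous
(i.e. non-constant) equilibria of the reaction–diffusion system
`u'' + f(u) = 0` on `(-π/2, π/2)` with Neumann boundary conditions has the
cardinality of the continuum.  An equilibrium is a `C²` function
`u : [-π/2, π/2] → ℝ³` (encoded here by `u, u', u''` with derivatives taken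
within the interval and `u''` continuous on it). -/
theorem stmt2 :
    ∃ f : EuclideanSpace ℝ (Fin 3) → EuclideanSpace ℝ (Fin 3),
      ContDiff ℝ 2 f ∧
      (∀ u : EuclideanSpace ℝ (Fin 3), ∀ i j : Fin 3, i ≠ j →
        0 < fderiv ℝ f u (EuclideanSpace.single j 1) i) ∧
      (∃ e₁ e₂ e₃ : EuclideanSpace ℝ (Fin 3),
        ∀ u : ℝ → EuclideanSpace ℝ (Fin 3),
          (∀ t : ℝ, 0 ≤ t → HasDerivAt u (f (u t)) t) →
          (Tendsto u atTop (nhds e₁) ∨ Tendsto u atTop (nhds e₂) ∨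
            Tendsto u atTop (nhds e₃))) ∧
      Cardinal.mk
        {v : Set.Icc (-(Real.pi/2)) (Real.pi/2) → EuclideanSpace ℝ (Fin 3) |
          ∃ u u' u'' : ℝ → EuclideanSpace ℝ (Fin 3),
            (∀ x ∈ Set.Icc (-(Real.pi/2)) (Real.pi/2),
              HasDerivWithinAt u (u' x) (Set.Icc (-(Real.pi/2)) (Real.pi/2)) x) ∧
            (∀ x ∈ Set.Icc (-(Real.pi/2)) (Real.pi/2),
              HasDerivWithinAt u' (u'' x) (Set.Icc (-(Real.pi/2)) (Real.pi/2)) x) ∧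
            ContinuousOn u'' (Set.Icc (-(Real.pi/2)) (Real.pi/2)) ∧
            (∀ x ∈ Set.Ioo (-(Real.pi/2)) (Real.pi/2), u'' x + f (u x) = 0) ∧
            u' (-(Real.pi/2)) = 0 ∧ u' (Real.pi/2) = 0 ∧
            (∃ x ∈ Set.Icc (-(Real.pi/2)) (Real.pi/2),
              ∃ y ∈ Set.Icc (-(Real.pi/2)) (Real.pi/2), u x ≠ u y) ∧
            v = fun x => u x.1}
        = Cardinal.continuum :=
  ⟨Fv, contDiff_Fv, fderiv_Fv_offdiag, ⟨Pt 0, Pt Rz, Pt (-Rz), cond2⟩, card_SolSet⟩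
end

section
/- Fix 0 < λ₁ < λ₂ and let g : ℝ² → ℝ² be any function with g(u) = α(u) for all u ∈ A. Then for every λ ∈ [λ₁, λ₂], the function φ_λ : [−π/2, π/2] → ℝ², φ_λ(x) := λ(cos(sin x), sin(sin x)), satisfies φ_λ''(x) + g(φ_λ(x)) = 0 for every x ∈ [−π/2, π/2], together with the Neumann boundary conditions φ_λ'(−π/2) = φ_λ'(π/2) = 0. In other words, φ_λ is an equilibrium of the reaction–diffusion system ∂u_i/∂t = Δu_i + g_i(u) on Ω = (−π/2, π/2) with Neumann boundary conditions. -/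
open Real

lemma stmt4_aux (lam : ℝ) (x : ℝ) :
    HasDerivAt (fun x => (lam * Real.cos (Real.sin x), lam * Real.sin (Real.sin x)))
      (-(lam * (Real.sin (Real.sin x) * Real.cos x)),
        lam * (Real.cos (Real.sin x) * Real.cos x)) x := by
  have h1 : HasDerivAt (fun x => Real.cos (Real.sin x))
      (-Real.sin (Real.sin x) * Real.cos x) x :=
    (Real.hasDerivAt_cos (Real.sin x)).comp x (Real.hasDerivAt_sin x)
  have h2 : HasDerivAt (fun x => Real.sin (Real.sin x))
      (Real.cos (Real.sin x) * Real.cos x) x :=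
    (Real.hasDerivAt_sin (Real.sin x)).comp x (Real.hasDerivAt_sin x)
  have := (h1.const_mul lam).prodMk (h2.const_mul lam)
  convert this using 2 <;> ring

lemma stmt4_aux2 (lam : ℝ) (x : ℝ) :
    HasDerivAt (fun x => (-(lam * (Real.sin (Real.sin x) * Real.cos x)),
        lam * (Real.cos (Real.sin x) * Real.cos x)))
      (-(lam * (Real.cos (Real.sin x) * Real.cos x * Real.cos x
          + Real.sin (Real.sin x) * (-Real.sin x))),
        lam * (-Real.sin (Real.sin x) * Real.cos x * Real.cos x
          + Real.cos (Real.sin x) * (-Real.sin x))) x := by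
  have h1 : HasDerivAt (fun x => Real.cos (Real.sin x))
      (-Real.sin (Real.sin x) * Real.cos x) x :=
    (Real.hasDerivAt_cos (Real.sin x)).comp x (Real.hasDerivAt_sin x)
  have h2 : HasDerivAt (fun x => Real.sin (Real.sin x))
      (Real.cos (Real.sin x) * Real.cos x) x :=
    (Real.hasDerivAt_sin (Real.sin x)).comp x (Real.hasDerivAt_sin x)
  have hc := Real.hasDerivAt_cos x
  have hA := (((h2.mul hc)).const_mul lam).neg
  have hB := ((h1.mul hc)).const_mul lam
  have := hA.prodMk hB
  convert this using 2 <;> simp only [Pi.neg_apply, Pi.mul_apply] <;> ring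

/-- **Corollary (a continuum of nonhomogeneous equilibria).**
Fix `0 < λ₁ < λ₂` and let `g : ℝ² → ℝ²` agree on the annular sector `A` with the
vector field `α(r(cos θ, sin θ)) = (r((1-θ²)cos θ - θ sin θ), r(θ cos θ + (1-θ²) sin θ))`.
Then for every `λ ∈ [λ₁, λ₂]` the arc `φ_λ(x) = (λ cos(sin x), λ sin(sin x))`
satisfies `φ_λ'' + g ∘ φ_λ = 0` on `[-π/2, π/2]` and the Neumann boundary
conditions `φ_λ'(±π/2) = 0`; i.e. it is an equilibrium of the reaction–diffusion
system `∂u/∂t = Δu + g(u)` on `(-π/2, π/2)` with Neumann boundary conditions. -/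
theorem stmt4 (l₁ l₂ : ℝ) (h1 : 0 < l₁) (h12 : l₁ < l₂)
    (g : ℝ × ℝ → ℝ × ℝ)
    (hg : ∀ r θ : ℝ, l₁ ≤ r → r ≤ l₂ → -1 ≤ θ → θ ≤ 1 →
      g (r * Real.cos θ, r * Real.sin θ) =
        (r * ((1 - θ^2) * Real.cos θ - θ * Real.sin θ),
         r * (θ * Real.cos θ + (1 - θ^2) * Real.sin θ)))
    (lam : ℝ) (hlam : lam ∈ Set.Icc l₁ l₂)
    (φ : ℝ → ℝ × ℝ)
    (hφ : φ = fun x => (lam * Real.cos (Real.sin x), lam * Real.sin (Real.sin x))) :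
    (∀ x ∈ Set.Icc (-(Real.pi/2)) (Real.pi/2), deriv (deriv φ) x + g (φ x) = 0) ∧
    deriv φ (-(Real.pi/2)) = 0 ∧ deriv φ (Real.pi/2) = 0 := by
  subst hφ
  have hd : deriv (fun x => (lam * Real.cos (Real.sin x), lam * Real.sin (Real.sin x)))
      = fun x => (-(lam * (Real.sin (Real.sin x) * Real.cos x)),
          lam * (Real.cos (Real.sin x) * Real.cos x)) := by
    funext x; exact (stmt4_aux lam x).deriv
  refine ⟨?_, ?_, ?_⟩
  · intro x _
    rw [hd, (stmt4_aux2 lam x).deriv,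
      hg lam (Real.sin x) hlam.1 hlam.2 (Real.neg_one_le_sin x) (Real.sin_le_one x)]
    have hpy : Real.cos x ^ 2 = 1 - Real.sin x ^ 2 := Real.cos_sq' x
    rw [Prod.mk_add_mk, Prod.mk_eq_zero]
    constructor
    · linear_combination (-(lam * Real.cos (Real.sin x))) * hpy
    · linear_combination (-(lam * Real.sin (Real.sin x))) * hpy
  · rw [hd]; simp
  · rw [hd]; simp
end

section
/- Let n ≥ 1, let θ : ℝⁿ → ℝ and γ : ℝ → ℝ be functions, let Q > 0, and let G : ℝⁿ → ℝⁿ satisfy S(G(u)) = 0 for every u ∈ ℝⁿ. Define M_i(u) := θ(u)(S(u)/n − u_i) + γ(S(u)) and f_i(u) := Q·M_i(u) + (1 − θ(u))·G_i(u) for i = 1,…,n. If u : I → ℝⁿ is differentiable on an interval I and satisfies u'(t) = f(u(t)) for all t ∈ I, then the function v(t) := S(u(t))/n is differentiable on I with v'(t) = Q·γ(n·v(t)) for all t ∈ I. -/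
/-- **Lemma (evolution of the average along the embedded system).**
Let `S(G(u)) = 0` for all `u`, `M_i(u) = θ(u)(S(u)/n - u_i) + γ(S(u))`, and
`f_i(u) = Q M_i(u) + (1 - θ(u)) G_i(u)` with `Q > 0` and `S(u) = u₁ + ⋯ + uₙ`.
Along any solution `u` of `u' = f(u)` on an interval `I`, the function
`v(t) = S(u(t))/n` is differentiable with `v'(t) = Q γ(n v(t))`. -/
theorem stmt15 (n : ℕ) (hn : 1 ≤ n)
    (θ : EuclideanSpace ℝ (Fin n) → ℝ) (γ : ℝ → ℝ)
    (Q : ℝ) (hQ : 0 < Q)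
    (G : EuclideanSpace ℝ (Fin n) → EuclideanSpace ℝ (Fin n))
    (hG : ∀ u : EuclideanSpace ℝ (Fin n), (∑ i, G u i) = 0)
    (M f : EuclideanSpace ℝ (Fin n) → EuclideanSpace ℝ (Fin n))
    (hM : ∀ u : EuclideanSpace ℝ (Fin n), ∀ i : Fin n,
      M u i = θ u * ((∑ j, u j) / n - u i) + γ (∑ j, u j))
    (hf : ∀ u : EuclideanSpace ℝ (Fin n), ∀ i : Fin n,
      f u i = Q * M u i + (1 - θ u) * G u i)
    (I : Set ℝ) (hI : I.OrdConnected)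
    (u : ℝ → EuclideanSpace ℝ (Fin n))
    (hu : ∀ t ∈ I, HasDerivWithinAt u (f (u t)) I t) :
    ∀ t ∈ I, HasDerivWithinAt (fun s => (∑ j, u s j) / n)
      (Q * γ ((n : ℝ) * ((∑ j, u t j) / n))) I t := by
  intro t ht
  have hn' : (n : ℝ) ≠ 0 := by positivity
  have hcoord : ∀ j : Fin n, HasDerivWithinAt (fun s => u s j) (f (u t) j) I t := by
    intro j
    exact (EuclideanSpace.proj (𝕜 := ℝ) j).hasFDerivAt.comp_hasDerivWithinAt t (hu t ht)
  have hsum : HasDerivWithinAt (fun s => ∑ j, u s j) (∑ j, f (u t) j) I t :=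
    HasDerivWithinAt.fun_sum fun j _ => hcoord j
  have key : (∑ j, f (u t) j) / n = Q * γ ((n : ℝ) * ((∑ j, u t j) / n)) := by
    have h1 : ∑ j, f (u t) j = Q * (∑ j, M (u t) j) + (1 - θ (u t)) * (∑ j, G (u t) j) := by
      rw [Finset.mul_sum, Finset.mul_sum, ← Finset.sum_add_distrib]
      exact Finset.sum_congr rfl fun j _ => hf (u t) j
    rw [h1, hG]
    have h2 : ∑ j, M (u t) j = (n : ℝ) * γ (∑ j, u t j) := by
      have : ∑ j, M (u t) j
          = ∑ j : Fin n, (θ (u t) * ((∑ j, u t j) / n - u t j) + γ (∑ j, u t j)) :=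
        Finset.sum_congr rfl fun j _ => hM (u t) j
      rw [this]
      rw [Finset.sum_add_distrib, ← Finset.mul_sum, Finset.sum_sub_distrib,
        Finset.sum_const, Finset.card_univ, Fintype.card_fin]
      simp only [Finset.sum_const, Finset.card_univ, Fintype.card_fin, nsmul_eq_mul]
      field_simp
      ring
    rw [h2]
    field_simp
    ring
  have := hsum.div_const (n : ℝ)
  rwa [key] at this
end
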